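/- Let F : ℝ × ℝ^d → ℝ^d be bounded and satisfy |F(t, z̄) − F(t, z)| ≤ L|z̄ − z| for all t, z, z̄ and some L > 0. Let x : [a,s] → ℝ^d solve ẋ = F(t,x). Fix ε > 0 and any τ with 0 < τ < min(s−a, ε/(4L), ε/(8L‖F‖_∞)), and set ρ = τε/4. Then for every y with |x(s) − y| < ρ there is a control u with ‖u‖_∞ < ε vanishing on [a, s−τ] and a solution x_ε of ẋ_ε = F(t, x_ε) + u(t) with x_ε = x on [a, s−τ] and x_ε(s) = y. -/

import Mathlib

open Metric Set Filter Topology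
noncomputable section

/-- A function is piecewise continuous on a set if it is continuous there
except possibly at finitely many points. -/
def PiecewiseContinuousOn {d : ℕ} (u : ℝ → EuclideanSpace ℝ (Fin d)) (s : Set ℝ) : Prop :=
  ∃ S : Finset ℝ, ContinuousOn u (s \ (S : Set ℝ))

set_option maxHeartbeats 1000000 in
/-- quantitative small-control endpoint adjustment lemma, with
explicit admissible values of `τ` and `ρ = τ ε / 4`, for a bounded right-hand
side which is `L`-Lipschitz in the state variable. -/
theorem endpoint_adjustment_quantitative
    (d : ℕ) (hd : 1 ≤ d)
    (F : ℝ × EuclideanSpace ℝ (Fin d) → EuclideanSpace ℝ (Fin d))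
    (hFc : Continuous F)
    (hFbdd : BddAbove (range fun p => ‖F p‖))
    (L : ℝ) (hL : 0 < L)
    (hFlip : ∀ t z z', ‖F (t, z') - F (t, z)‖ ≤ L * ‖z' - z‖)
    (a s : ℝ) (has : a < s)
    (x : ℝ → EuclideanSpace ℝ (Fin d))
    (hx : ∀ t ∈ Icc a s, HasDerivAt x (F (t, x t)) t)
    (ε : ℝ) (hε : 0 < ε)
    (τ : ℝ) (hτ0 : 0 < τ)
    (hτ : τ < min (s - a) (min (ε / (4 * L)) (ε / (8 * L * (⨆ p, ‖F p‖))))) :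
    ∀ y : EuclideanSpace ℝ (Fin d), ‖x s - y‖ < τ * ε / 4 →
      ∃ u : ℝ → EuclideanSpace ℝ (Fin d),
        PiecewiseContinuousOn u (Icc a s) ∧
        (∀ t, ‖u t‖ < ε) ∧
        (∀ t ∈ Icc a (s - τ), u t = 0) ∧
        ∃ xe : ℝ → EuclideanSpace ℝ (Fin d),
          ContinuousOn xe (Icc a s) ∧
          (∃ S : Finset ℝ, ∀ t ∈ Icc a s \ (S : Set ℝ),
            HasDerivAt xe (F (t, xe t) + u t) t) ∧
          (∀ t ∈ Icc a (s - τ), xe t = x t) ∧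
          xe s = y := by
  intro y hy
  set M := ⨆ p, ‖F p‖ with hMdef
  have hτ1 : τ < ε / (4 * L) := lt_of_lt_of_le hτ ((min_le_right _ _).trans (min_le_left _ _))
  have hτ2 : τ < ε / (8 * L * M) := lt_of_lt_of_le hτ ((min_le_right _ _).trans (min_le_right _ _))
  have hτne : τ ≠ 0 := ne_of_gt hτ0
  have hMle : ∀ p, ‖F p‖ ≤ M := fun p => le_ciSup hFbdd p
  have hM0 : 0 ≤ M := le_trans (norm_nonneg _) (hMle (0, 0))
  have hxc : ContinuousOn x (Icc a s) := fun t ht => (hx t ht).continuousAt.continuousWithinAt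
  set g : ℝ → ℝ := fun t => max 0 ((t - (s - τ)) / τ) with hgdef
  have hgc : Continuous g := continuous_const.max (by continuity)
  set xe : ℝ → EuclideanSpace ℝ (Fin d) := fun t => x t + g t • (y - x s) with hxedef
  have hxec : ContinuousOn xe (Icc a s) :=
    hxc.add ((hgc.continuousOn).smul continuousOn_const)
  have hg0 : ∀ r, r ≤ s - τ → g r = 0 := by
    intro r hr
    have : (r - (s - τ)) / τ ≤ 0 := div_nonpos_of_nonpos_of_nonneg (by linarith) hτ0.le
    simp [hgdef, max_eq_left this]
  have hxeeq : ∀ r, r ≤ s - τ → xe r = x r := by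
    intro r hr; simp [hxedef, hg0 r hr]
  have hxes : xe s = y := by
    have h1 : (s - (s - τ)) / τ = 1 := by field_simp; ring
    have : g s = 1 := by simp [hgdef, h1, div_self hτne]
    simp [hxedef, this]
  set u : ℝ → EuclideanSpace ℝ (Fin d) := fun t =>
    if s - τ < t ∧ t ≤ s then F (t, x t) - F (t, xe t) + τ⁻¹ • (y - x s) else 0 with hudef
  have hyn : ‖y - x s‖ < τ * ε / 4 := by rwa [norm_sub_rev] at hy
  -- bound on u
  have hub : ∀ t, ‖u t‖ < ε := by
    intro t
    by_cases h : s - τ < t ∧ t ≤ s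
    · have h1 : ‖τ⁻¹ • (y - x s)‖ < ε / 4 := by
        rw [norm_smul, norm_inv, Real.norm_eq_abs, abs_of_pos hτ0, inv_mul_lt_iff₀ hτ0]
        calc ‖y - x s‖ < τ * ε / 4 := hyn
          _ = τ * (ε / 4) := by ring
      have hgt1 : g t ≤ 1 := by
        have : (t - (s - τ)) / τ ≤ 1 := by
          rw [div_le_one hτ0]; linarith [h.2]
        simp [hgdef, this]
      have hgt0 : 0 ≤ g t := le_max_left _ _
      have hdist : ‖x t - xe t‖ < τ * ε / 4 := by
        have : x t - xe t = (-(g t)) • (y - x s) := by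
          simp only [hxedef]; module
        rw [this, norm_smul, norm_neg, Real.norm_eq_abs, abs_of_nonneg hgt0]
        calc g t * ‖y - x s‖ ≤ 1 * ‖y - x s‖ :=
              mul_le_mul_of_nonneg_right hgt1 (norm_nonneg _)
          _ = ‖y - x s‖ := one_mul _
          _ < τ * ε / 4 := hyn
      have h2 : ‖F (t, x t) - F (t, xe t)‖ ≤ ε / 2 := by
        by_cases hM : M ≤ ε / 4
        · calc ‖F (t, x t) - F (t, xe t)‖ ≤ ‖F (t, x t)‖ + ‖F (t, xe t)‖ := norm_sub_le _ _
            _ ≤ M + M := add_le_add (hMle _) (hMle _)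
            _ ≤ ε / 2 := by linarith
        · push_neg at hM
          have hMpos : 0 < M := lt_trans (by linarith) hM
          have h8 : 0 < 8 * L * M := by positivity
          have hτM : τ * (8 * L * M) < ε := by
            rw [lt_div_iff₀ h8] at hτ2; exact hτ2
          calc ‖F (t, x t) - F (t, xe t)‖ ≤ L * ‖x t - xe t‖ := hFlip t (xe t) (x t)
            _ ≤ L * (τ * ε / 4) := mul_le_mul_of_nonneg_left hdist.le hL.le
            _ ≤ ε / 2 := by nlinarith [mul_pos hε hL]
      have hform : u t = F (t, x t) - F (t, xe t) + τ⁻¹ • (y - x s) := by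
        simp [hudef, h]
      rw [hform]
      calc ‖F (t, x t) - F (t, xe t) + τ⁻¹ • (y - x s)‖
          ≤ ‖F (t, x t) - F (t, xe t)‖ + ‖τ⁻¹ • (y - x s)‖ := norm_add_le _ _
        _ < ε / 2 + ε / 4 := by linarith
        _ < ε := by linarith
    · have : u t = 0 := by simp [hudef, h]
      rw [this]; simpa using hε
  have huzero : ∀ t ∈ Icc a (s - τ), u t = 0 := by
    intro t ht
    have : ¬ (s - τ < t ∧ t ≤ s) := by
      rintro ⟨h1, -⟩; linarith [ht.2]
    simp [hudef, this]
  -- piecewise continuity of u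
  have hxecont := hxec
  have hform : ContinuousOn (fun r => F (r, x r) - F (r, xe r) + τ⁻¹ • (y - x s))
      (Icc a s) := by
    have hFx : ContinuousOn (fun r => F (r, x r)) (Icc a s) :=
      hFc.comp_continuousOn (continuousOn_id.prodMk hxc)
    have hFxe : ContinuousOn (fun r => F (r, xe r)) (Icc a s) :=
      hFc.comp_continuousOn (continuousOn_id.prodMk hxec)
    exact (hFx.sub hFxe).add continuousOn_const
  have hucont : ContinuousOn u (Icc a s \ ({s - τ} : Set ℝ)) := by
    rintro t ⟨ht, hts⟩
    have htne : t ≠ s - τ := by simpa using hts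
    rcases htne.lt_or_gt with h | h
    · have hmem : Iio (s - τ) ∈ 𝓝 t := Iio_mem_nhds h
      have heq : u =ᶠ[nhds t] fun _ => (0 : EuclideanSpace ℝ (Fin d)) := by
        filter_upwards [hmem] with r hr
        have : ¬ (s - τ < r ∧ r ≤ s) := by rintro ⟨h1, -⟩; exact absurd hr (not_lt.2 h1.le)
        simp [hudef, this]
      exact ((continuousAt_congr heq).2 continuousAt_const).continuousWithinAt
    · have hmem : Ioi (s - τ) ∈ 𝓝 t := Ioi_mem_nhds h
      rw [← continuousWithinAt_inter hmem]
      have hc : ContinuousWithinAt (fun r => F (r, x r) - F (r, xe r) + τ⁻¹ • (y - x s))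
          ((Icc a s \ ({s - τ} : Set ℝ)) ∩ Ioi (s - τ)) t :=
        (hform t ht).mono (fun r hr => hr.1.1)
      apply hc.congr
      · rintro r ⟨⟨hr, -⟩, hr2⟩
        have : s - τ < r ∧ r ≤ s := ⟨hr2, hr.2⟩
        simp [hudef, this]
      · have : s - τ < t ∧ t ≤ s := ⟨h, ht.2⟩
        simp [hudef, this]
  -- derivative
  have hD : ∀ t ∈ Icc a s \ (({s - τ} : Finset ℝ) : Set ℝ),
      HasDerivAt xe (F (t, xe t) + u t) t := by
    rintro t ⟨ht, hts⟩
    have htne : t ≠ s - τ := by simpa using hts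
    rcases htne.lt_or_gt with h | h
    · have hueq : u t = 0 := by
        have : ¬ (s - τ < t ∧ t ≤ s) := by rintro ⟨h1, -⟩; exact absurd h (not_lt.2 h1.le)
        simp [hudef, this]
      have hxet : xe t = x t := hxeeq t h.le
      have heq : xe =ᶠ[nhds t] x := by
        filter_upwards [Iio_mem_nhds h] with r hr
        exact hxeeq r hr.le
      rw [hueq, hxet, add_zero]
      exact (hx t ht).congr_of_eventuallyEq heq
    · have hueq : u t = F (t, x t) - F (t, xe t) + τ⁻¹ • (y - x s) := by
        simp [hudef, h, ht.2]
      have heq : xe =ᶠ[nhds t] fun r => x r + ((r - (s - τ)) / τ) • (y - x s) := by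
        filter_upwards [Ioi_mem_nhds h] with r hr
        have : 0 ≤ (r - (s - τ)) / τ := div_nonneg (by linarith [mem_Ioi.1 hr]) hτ0.le
        simp [hxedef, hgdef, max_eq_right this]
      have h2 : HasDerivAt (fun r : ℝ => (r - (s - τ)) / τ) τ⁻¹ t := by
        simpa [one_div] using ((hasDerivAt_id t).sub_const (s - τ)).div_const τ
      have hderiv : HasDerivAt (fun r => x r + ((r - (s - τ)) / τ) • (y - x s))
          (F (t, x t) + τ⁻¹ • (y - x s)) t :=
        (hx t ht).add (h2.smul_const (y - x s))
      have hfin := hderiv.congr_of_eventuallyEq heq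
      refine hfin.congr_deriv ?_
      rw [hueq]; abel
  exact ⟨u, ⟨{s - τ}, by rw [Finset.coe_singleton]; exact hucont⟩, hub, huzero,
    xe, hxec, ⟨{s - τ}, hD⟩, fun t ht => hxeeq t ht.2, hxes⟩
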